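/- Let (Ω, μ) be a measure space, f : Ω → ℝ measurable with e^{sf}, e^f, e^{2f} integrable, 0 < s < 1, and suppose (∫ e^f dμ)² ≥ C · ∫ e^{2f} dμ for some constant C > 0. Then ∫ e^f dμ ≤ C^{−(1−s)/s} · (∫ e^{sf} dμ)^{1/s}. -/

import Mathlib

open MeasureTheory

lemma memLp_exp_aux {Ω : Type*} [MeasurableSpace Ω] {μ : Measure Ω}
    {g : Ω → ℝ} (hg : Measurable g) {p : ℝ} (hp : 0 < p)
    (hint : Integrable (fun x => Real.exp (p * g x)) μ) :
    MemLp (fun x => Real.exp (g x)) (ENNReal.ofReal p) μ := by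
  have A : ENNReal.ofReal p ≠ 0 := by
    simpa [ENNReal.ofReal_eq_zero, not_le] using hp
  have B : ENNReal.ofReal p ≠ ⊤ := ENNReal.ofReal_ne_top
  have hm : AEStronglyMeasurable (fun x => Real.exp (g x)) μ :=
    (Real.measurable_exp.comp hg).aestronglyMeasurable
  rw [← memLp_norm_rpow_iff hm A B, ENNReal.toReal_ofReal hp.le,
    ENNReal.div_self A B, memLp_one_iff_integrable]
  apply hint.congr
  filter_upwards with x
  rw [Real.norm_of_nonneg (Real.exp_pos _).le, ← Real.exp_mul, mul_comm]

theorem interpolation_estimate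
    {Ω : Type*} [MeasurableSpace Ω] (μ : Measure Ω)
    (f : Ω → ℝ) (hf : Measurable f) (s : ℝ) (hs0 : 0 < s) (hs1 : s < 1)
    (hsf : Integrable (fun x => Real.exp (s * f x)) μ)
    (h1f : Integrable (fun x => Real.exp (f x)) μ)
    (h2f : Integrable (fun x => Real.exp (2 * f x)) μ)
    (hsfpos : 0 < ∫ x, Real.exp (s * f x) ∂μ)
    (h1fpos : 0 < ∫ x, Real.exp (f x) ∂μ)
    (h2fpos : 0 < ∫ x, Real.exp (2 * f x) ∂μ)
    (C : ℝ) (hC : 0 < C)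
    (hconstraint : C * ∫ x, Real.exp (2 * f x) ∂μ
      ≤ (∫ x, Real.exp (f x) ∂μ) ^ 2) :
    ∫ x, Real.exp (f x) ∂μ
      ≤ C ^ (-(1 - s) / s) * (∫ x, Real.exp (s * f x) ∂μ) ^ (1 / s) := by
  set A := ∫ x, Real.exp (f x) ∂μ with hA
  set S := ∫ x, Real.exp (s * f x) ∂μ with hS
  set T := ∫ x, Real.exp (2 * f x) ∂μ with hT
  have h2s : (0:ℝ) < 2 - s := by linarith
  set a : ℝ := 1 / (2 - s) with ha
  set b : ℝ := (1 - s) / (2 - s) with hb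
  have h1s : (0:ℝ) < 1 - s := by linarith
  have ha0 : 0 < a := by rw [ha]; positivity
  have hb0 : 0 < b := by rw [hb]; exact div_pos h1s h2s
  -- conjugate exponents
  have hpq : Real.HolderConjugate (2 - s) ((2 - s) / (1 - s)) := by
    rw [Real.holderConjugate_iff]
    constructor
    · linarith
    · rw [inv_div]; field_simp; ring
  -- Hölder
  have hu : MemLp (fun x => Real.exp (a * s * f x)) (ENNReal.ofReal (2 - s)) μ := by
    apply memLp_exp_aux (by measurability) h2s
    apply hsf.congr
    filter_upwards with x
    congr 1; rw [ha]; field_simp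
  have hv : MemLp (fun x => Real.exp (2 * b * f x)) (ENNReal.ofReal ((2 - s) / (1 - s))) μ := by
    apply memLp_exp_aux (by measurability) (div_pos h2s h1s)
    apply h2f.congr
    filter_upwards with x
    congr 1; rw [hb]; field_simp [h2s.ne', h1s.ne']
  have holder := MeasureTheory.integral_mul_le_Lp_mul_Lq_of_nonneg hpq
    (Filter.Eventually.of_forall fun x => (Real.exp_pos _).le)
    (Filter.Eventually.of_forall fun x => (Real.exp_pos _).le) hu hv
  have e1 : ∫ x, Real.exp (a * s * f x) * Real.exp (2 * b * f x) ∂μ = A := by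
    rw [hA]; apply integral_congr_ae; filter_upwards with x
    rw [← Real.exp_add]; congr 1
    have h : a * s + 2 * b = 1 := by rw [ha, hb]; field_simp; ring
    linear_combination f x * h
  have e2 : ∫ x, Real.exp (a * s * f x) ^ (2 - s) ∂μ = S := by
    rw [hS]; apply integral_congr_ae; filter_upwards with x
    rw [← Real.exp_mul]; congr 1
    rw [ha]; field_simp [h2s.ne']
  have e3 : ∫ x, Real.exp (2 * b * f x) ^ ((2 - s) / (1 - s)) ∂μ = T := by
    rw [hT]; apply integral_congr_ae; filter_upwards with x
    rw [← Real.exp_mul]; congr 1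
    rw [hb]; field_simp [h2s.ne', h1s.ne']
  rw [e1, e2, e3] at holder
  have hinv : 1 / ((2 - s) / (1 - s)) = b := by rw [hb, one_div_div]
  rw [hinv] at holder
  -- holder : A ≤ S ^ (1/(2-s)) * T ^ b
  have hTb : T ^ b ≤ (A ^ 2 / C) ^ b := by
    apply Real.rpow_le_rpow h2fpos.le _ hb0.le
    rw [le_div_iff₀ hC]; linarith [hconstraint]
  have key : A ≤ S ^ a * (A ^ 2 / C) ^ b := by
    calc A ≤ S ^ (1 / (2 - s)) * T ^ b := holder
    _ ≤ S ^ a * (A ^ 2 / C) ^ b := by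
        rw [← ha]
        exact mul_le_mul_of_nonneg_left hTb (Real.rpow_nonneg hsfpos.le _)
  have hexp : (A ^ 2 / C) ^ b = A ^ (2 * b) * C ^ (-b) := by
    rw [Real.div_rpow (by positivity) hC.le, ← Real.rpow_natCast A 2,
      ← Real.rpow_mul h1fpos.le, Real.rpow_neg hC.le, div_eq_mul_inv]
    norm_num
  rw [hexp] at key
  -- A ≤ S^a * A^(2b) * C^(-b), so A^(1-2b) ≤ S^a * C^(-b)
  have h12b : 1 - 2 * b = s / (2 - s) := by rw [hb]; field_simp; ring
  have step : A ^ (1 - 2 * b) ≤ S ^ a * C ^ (-b) := by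
    rw [Real.rpow_sub h1fpos, Real.rpow_one]
    rw [div_le_iff₀ (Real.rpow_pos_of_pos h1fpos _)]
    calc A ≤ S ^ a * (A ^ (2 * b) * C ^ (-b)) := key
    _ = S ^ a * C ^ (-b) * A ^ (2 * b) := by ring
  have hse : (0:ℝ) < (2 - s) / s := by positivity
  have final := Real.rpow_le_rpow (Real.rpow_nonneg h1fpos.le _) step hse.le
  rw [← Real.rpow_mul h1fpos.le] at final
  have hone : (1 - 2 * b) * ((2 - s) / s) = 1 := by
    rw [h12b]; field_simp
  rw [hone, Real.rpow_one] at final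
  calc A ≤ (S ^ a * C ^ (-b)) ^ ((2 - s) / s) := final
  _ = C ^ (-(1 - s) / s) * S ^ (1 / s) := by
      have ea : a * ((2 - s) / s) = 1 / s := by
        rw [ha]; field_simp [h2s.ne', hs0.ne']
      have eb : -b * ((2 - s) / s) = -(1 - s) / s := by
        rw [hb]; field_simp [h2s.ne', hs0.ne']
      rw [Real.mul_rpow (Real.rpow_nonneg hsfpos.le _) (Real.rpow_nonneg hC.le _),
        ← Real.rpow_mul hsfpos.le, ← Real.rpow_mul hC.le, ea, eb, mul_comm]
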